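/- Let q be a nonzero complex number with q² ≠ 1, let A be an associative unital ℂ-algebra, and let (h_s)_{s≥1} and (E_n)_{n≥0} be families of elements of A satisfying h_s E_n − E_n h_s = (q^s[s]/s)·E_{n+s} for all s ≥ 1 and n ≥ 0. Set H(z) := (q−q^{−1}) ∑_{s≥1} h_s z^s and E⁺(z) := ∑_{n≥0} E_n z^n in A[[z]]. Then H′(z)·E⁺(z) − E⁺(z)·H′(z) + (E⁺)′(z) = ∑_{a≥0} q^{a+2}[a+1]·E_{a+1} z^a in A[[z]], where ′ denotes the formal derivative with respect to z. -/

import Mathlib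

/-- The `q`-integer `[s] = (q^s - q^{-s})/(q - q^{-1})`. -/
noncomputable def qInt (q : ℂ) (s : ℕ) : ℂ := (q ^ s - q⁻¹ ^ s) / (q - q⁻¹)

/-- The formal derivative of a power series over a (possibly noncommutative) ring. -/
noncomputable def psDeriv {A : Type*} [Ring A] (f : PowerSeries A) : PowerSeries A :=
  PowerSeries.mk fun n => (n + 1) • PowerSeries.coeff (n + 1) f

/-- Let `q ≠ 0` with `q² ≠ 1`, `A` an associative unital `ℂ`-algebra, and
`(h_s)_{s≥1}`, `(E_n)_{n≥0}` families in `A` with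
`h_s E_n − E_n h_s = (q^s[s]/s) • E_{n+s}` for `s ≥ 1`, `n ≥ 0`.
With `H(z) = (q−q⁻¹) ∑_{s≥1} h_s z^s` and `E⁺(z) = ∑_{n≥0} E_n z^n`, one has
`H′(z)·E⁺(z) − E⁺(z)·H′(z) + (E⁺)′(z) = ∑_{a≥0} q^{a+2}[a+1]·E_{a+1} z^a` in `A[[z]]`. -/
lemma qInt_key1 (q : ℂ) (hq : q ≠ 0) (hqq : q - q⁻¹ ≠ 0) (k : ℕ) :
    (q - q⁻¹) * (q ^ (k+1) * qInt q (k+1)) = (q^2)^(k+1) - 1 := by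
  have h1 : (q - q⁻¹) * (q ^ (k+1) * qInt q (k+1))
      = q^(k+1) * (qInt q (k+1) * (q - q⁻¹)) := by ring
  rw [h1, qInt, div_mul_cancel₀ _ hqq, inv_pow, mul_sub,
    mul_inv_cancel₀ (pow_ne_zero _ hq)]
  ring

lemma qInt_key2 (q : ℂ) (hq : q ≠ 0) (hq2 : q ^ 2 ≠ 1) (hqq : q - q⁻¹ ≠ 0) (a : ℕ) :
    ∑ k ∈ Finset.range (a+1), ((q^2)^(k+1) - 1) + ((a:ℂ)+1) = q^(a+2) * qInt q (a+1) := by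
  have h21 : (q^2 : ℂ) - 1 ≠ 0 := sub_ne_zero.mpr hq2
  have hs : ∀ k : ℕ, ((q^2)^(k+1) : ℂ) = q^2 * (q^2)^k := fun k => by rw [pow_succ']
  rw [Finset.sum_sub_distrib, Finset.sum_const]
  simp only [hs, ← Finset.mul_sum, Finset.card_range, nsmul_eq_mul,
    Nat.cast_add, Nat.cast_one, mul_one]
  rw [geom_sum_eq hq2, qInt, inv_pow, sub_add_cancel, mul_div_assoc',
    mul_div_assoc', div_eq_div_iff h21 hqq]
  have hpa : (q:ℂ)^(a+1) ≠ 0 := pow_ne_zero _ hq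
  field_simp
  ring

theorem deriv_commutator_identity (q : ℂ) (hq : q ≠ 0) (hq2 : q ^ 2 ≠ 1)
    (A : Type*) [Ring A] [Algebra ℂ A] (h E : ℕ → A)
    (hrel : ∀ s n : ℕ, 1 ≤ s →
      h s * E n - E n * h s = (q ^ s * qInt q s / (s : ℂ)) • E (n + s)) :
    psDeriv (PowerSeries.mk fun s => if s = 0 then 0 else (q - q⁻¹) • h s)
          * (PowerSeries.mk fun n => E n)
        - (PowerSeries.mk fun n => E n)
          * psDeriv (PowerSeries.mk fun s => if s = 0 then 0 else (q - q⁻¹) • h s)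
        + psDeriv (PowerSeries.mk fun n => E n)
      = PowerSeries.mk fun a => (q ^ (a + 2) * qInt q (a + 1)) • E (a + 1) := by
  have hqq : q - q⁻¹ ≠ 0 := by
    intro h0
    apply hq2
    have h1 : q = q⁻¹ := sub_eq_zero.mp h0
    field_simp at h1
    exact h1
  set D := psDeriv (PowerSeries.mk fun s => if s = 0 then 0 else (q - q⁻¹) • h s) with hDdef
  have hD : ∀ k : ℕ, PowerSeries.coeff k D = (((k:ℂ) + 1) * (q - q⁻¹)) • h (k+1) := by
    intro k
    simp only [hDdef, psDeriv, PowerSeries.coeff_mk, if_neg (Nat.succ_ne_zero k)]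
    rw [← Nat.cast_smul_eq_nsmul ℂ, smul_smul]
    push_cast
    ring_nf
  ext a
  rw [map_add, map_sub, PowerSeries.coeff_mul, PowerSeries.coeff_mul]
  simp only [psDeriv, PowerSeries.coeff_mk]
  rw [Finset.Nat.sum_antidiagonal_eq_sum_range_succ_mk,
      Finset.Nat.sum_antidiagonal_eq_sum_range_succ_mk]
  have hswap : ∑ k ∈ Finset.range a.succ, E (k, a - k).1 * PowerSeries.coeff (k, a - k).2 D
      = ∑ k ∈ Finset.range a.succ, E (a - k) * PowerSeries.coeff k D := by
    rw [← Finset.sum_range_reflect]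
    refine Finset.sum_congr rfl fun k hk => ?_
    have hk' : k ≤ a := Nat.lt_succ_iff.mp (Finset.mem_range.mp hk)
    have e1 : a.succ - 1 - k = a - k := by omega
    have e2 : a - (a - k) = k := Nat.sub_sub_self hk'
    simp only [e1, e2]
  rw [hswap, ← Finset.sum_sub_distrib]
  have hterm : ∀ k ∈ Finset.range a.succ,
      PowerSeries.coeff k D * E (a - k) - E (a - k) * PowerSeries.coeff k D
        = ((q^2)^(k+1) - 1) • E (a+1) := by
    intro k hk
    have hk' : k ≤ a := Nat.lt_succ_iff.mp (Finset.mem_range.mp hk)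
    have hsum : a - k + (k + 1) = a + 1 := by omega
    rw [hD k, smul_mul_assoc, mul_smul_comm, ← smul_sub,
      hrel (k+1) (a-k) (Nat.le_add_left 1 k), hsum, smul_smul]
    congr 1
    have hk0 : ((k:ℂ) + 1) ≠ 0 := Nat.cast_add_one_ne_zero k
    push_cast
    have hki : ((k:ℂ)+1) * ((k:ℂ)+1)⁻¹ = 1 := mul_inv_cancel₀ hk0
    rw [div_eq_mul_inv]
    linear_combination ((q - q⁻¹) * (q^(k+1) * qInt q (k+1))) * hki + qInt_key1 q hq hqq k
  rw [Finset.sum_congr rfl hterm, ← Finset.sum_smul,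
    ← Nat.cast_smul_eq_nsmul ℂ ((a:ℕ)+1), ← add_smul]
  push_cast
  rw [qInt_key2 q hq hq2 hqq a]
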